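/- Let p be an odd integer with p ≥ 3 and let θ ∈ (0, π). Then the real number D_p(e^{iθ}) = cos(pθ/2)/cos(θ/2) is negative if and only if there exists a natural number k such that (4k+1)π/p < θ < (4k+3)π/p. -/

import Mathlib

open LaurentPolynomial

/-- Evaluation of an integer Laurent polynomial at a (nonzero) complex number `z`,
substituting `t = z`. -/
noncomputable def evalz (z : ℂ) (f : LaurentPolynomial ℤ) : ℂ :=
  f.coeff.sum fun n a => (a : ℂ) * z ^ n

noncomputable def evalzHom (u : ℂˣ) : LaurentPolynomial ℤ →ₐ[ℤ] ℂ :=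
  AddMonoidAlgebra.lift ℤ ℂ ℤ ((Units.coeHom ℂ).comp (zpowersHom ℂˣ u))

lemma evalz_eq_hom (u : ℂˣ) (f : LaurentPolynomial ℤ) :
    evalz (u : ℂ) f = evalzHom u f := by
  rw [evalzHom, AddMonoidAlgebra.lift_apply]
  refine Finsupp.sum_congr fun n _ => ?_
  simp [zsmul_eq_mul]

lemma evalz_T (u : ℂˣ) (n : ℤ) : evalz (u : ℂ) (T n) = (u : ℂ) ^ n := by
  rw [evalz_eq_hom, evalzHom, T, AddMonoidAlgebra.lift_single]; simp

lemma exp_add_one (x : ℝ) :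
    Complex.exp (x * Complex.I) + 1 =
      2 * (Real.cos (x / 2) : ℂ) * Complex.exp ((x / 2 : ℝ) * Complex.I) := by
  have h1 : (x : ℂ) * Complex.I = ((x / 2 : ℝ) : ℂ) * Complex.I + ((x / 2 : ℝ) : ℂ) * Complex.I := by
    push_cast; ring
  have h2 : Complex.exp (((x / 2 : ℝ) : ℂ) * Complex.I) *
      Complex.exp (-(((x / 2 : ℝ) : ℂ) * Complex.I)) = 1 := by
    rw [← Complex.exp_add]; simp
  have h3 : Complex.exp (((x / 2 : ℝ) : ℂ) * Complex.I) +
      Complex.exp (-(((x / 2 : ℝ) : ℂ) * Complex.I)) = 2 * (Real.cos (x / 2) : ℂ) := by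
    rw [Complex.ofReal_cos, Complex.cos]
    ring_nf
  rw [h1, Complex.exp_add]
  calc Complex.exp (((x / 2 : ℝ) : ℂ) * Complex.I) * Complex.exp (((x / 2 : ℝ) : ℂ) * Complex.I) + 1
      = Complex.exp (((x / 2 : ℝ) : ℂ) * Complex.I) *
        (Complex.exp (((x / 2 : ℝ) : ℂ) * Complex.I) +
          Complex.exp (-(((x / 2 : ℝ) : ℂ) * Complex.I))) := by rw [mul_add, h2]
    _ = 2 * (Real.cos (x / 2) : ℂ) * Complex.exp ((x / 2 : ℝ) * Complex.I) := by rw [h3]; ring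

lemma cos_neg_iff_nat {x : ℝ} (hx : 0 < x) :
    Real.cos x < 0 ↔
      ∃ k : ℕ, (4 * (k : ℝ) + 1) * Real.pi / 2 < x ∧ x < (4 * (k : ℝ) + 3) * Real.pi / 2 := by
  have hπ := Real.pi_pos
  constructor
  · intro h
    set n : ℤ := ⌊x / (2 * Real.pi)⌋ with hn
    have h2π : 0 < 2 * Real.pi := by linarith
    have hn0 : 0 ≤ n := Int.floor_nonneg.mpr (by positivity)
    have hy1 : 0 ≤ x - n * (2 * Real.pi) := by
      have h' : (n : ℝ) * (2 * Real.pi) ≤ x :=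
        (le_div_iff₀ h2π).mp (Int.floor_le (x / (2 * Real.pi)))
      linarith
    have hy2 : x - n * (2 * Real.pi) < 2 * Real.pi := by
      have h' : x < ((n : ℝ) + 1) * (2 * Real.pi) := by
        have := (div_lt_iff₀ h2π).mp (Int.lt_floor_add_one (x / (2 * Real.pi)))
        push_cast at this ⊢
        linarith
      linarith
    have hcy : Real.cos (x - n * (2 * Real.pi)) < 0 := by
      rw [Real.cos_sub_int_mul_two_pi]; exact h
    set y := x - n * (2 * Real.pi) with hy
    have hy3 : Real.pi / 2 < y := by
      by_contra hle
      push_neg at hle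
      have : 0 ≤ Real.cos y :=
        Real.cos_nonneg_of_mem_Icc ⟨by linarith, hle⟩
      linarith
    have hy4 : y < 3 * Real.pi / 2 := by
      by_contra hle
      push_neg at hle
      have : 0 ≤ Real.cos (y - 2 * Real.pi) :=
        Real.cos_nonneg_of_mem_Icc ⟨by linarith, by linarith⟩
      rw [Real.cos_sub_two_pi] at this
      linarith
    refine ⟨n.toNat, ?_, ?_⟩
    · have : ((n.toNat : ℤ) : ℝ) = (n : ℝ) := by rw [Int.toNat_of_nonneg hn0]
      push_cast at this ⊢
      nlinarith
    · have : ((n.toNat : ℤ) : ℝ) = (n : ℝ) := by rw [Int.toNat_of_nonneg hn0]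
      push_cast at this ⊢
      nlinarith
  · rintro ⟨k, h1, h2⟩
    have := Real.cos_sub_int_mul_two_pi x (k : ℤ)
    rw [← this]
    apply Real.cos_neg_of_pi_div_two_lt_of_lt
    · push_cast; nlinarith
    · push_cast; nlinarith
lemma evalz_mul (u : ℂˣ) (f g : LaurentPolynomial ℤ) :
    evalz (u : ℂ) (f * g) = evalz (u : ℂ) f * evalz (u : ℂ) g := by
  rw [evalz_eq_hom, evalz_eq_hom, evalz_eq_hom, map_mul]

lemma evalz_add (u : ℂˣ) (f g : LaurentPolynomial ℤ) :
    evalz (u : ℂ) (f + g) = evalz (u : ℂ) f + evalz (u : ℂ) g := by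
  rw [evalz_eq_hom, evalz_eq_hom, evalz_eq_hom, map_add]

lemma evalz_one (u : ℂˣ) : evalz (u : ℂ) 1 = 1 := by
  rw [evalz_eq_hom, map_one]

/-- For `p` odd, `p ≥ 3`, and `θ ∈ (0, π)`, the real number
`D_p(e^(iθ)) = cos (p θ / 2) / cos (θ / 2)` is negative if and only if
`(4k+1)π/p < θ < (4k+3)π/p` for some natural number `k`. -/
theorem dp_negative_iff (p : ℕ) (hodd : Odd p) (hp : 3 ≤ p) (θ : ℝ)
    (hθ : θ ∈ Set.Ioo 0 Real.pi) :
    ∀ D : LaurentPolynomial ℤ, (T 1 + 1) * D = T (p : ℤ) + 1 →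
      evalz (Complex.exp (θ * Complex.I)) (T (-(((p : ℤ) - 1) / 2)) * D) =
        ((Real.cos (p * θ / 2) / Real.cos (θ / 2) : ℝ) : ℂ) ∧
      (Real.cos (p * θ / 2) / Real.cos (θ / 2) < 0 ↔
        ∃ k : ℕ, (4 * k + 1) * Real.pi / p < θ ∧ θ < (4 * k + 3) * Real.pi / p) := by
  obtain ⟨hθ0, hθπ⟩ := hθ
  have hπ := Real.pi_pos
  have hcos : 0 < Real.cos (θ / 2) :=
    Real.cos_pos_of_mem_Ioo ⟨by linarith, by linarith⟩
  intro D hD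
  obtain ⟨j, hj⟩ := hodd
  constructor
  · -- evaluation identity
    set u : ℂˣ := Units.mk0 (Complex.exp (θ * Complex.I)) (Complex.exp_ne_zero _) with hu
    have huv : (u : ℂ) = Complex.exp ((θ : ℝ) * Complex.I) := rfl
    have hj2 : (-(((p : ℤ) - 1) / 2)) = -(j : ℤ) := by omega
    have hpc : (p : ℂ) = 2 * (j : ℂ) + 1 := by exact_mod_cast congrArg (Nat.cast : ℕ → ℂ) hj
    have hzj : (u : ℂ) ^ (-(j : ℤ)) = Complex.exp ((-(j : ℝ) * θ : ℝ) * Complex.I) := by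
      rw [huv, ← Complex.exp_int_mul]
      congr 1
      push_cast
      ring
    have hzp : (u : ℂ) ^ ((p : ℤ)) = Complex.exp (((p * θ : ℝ)) * Complex.I) := by
      rw [huv, ← Complex.exp_int_mul]
      congr 1
      push_cast
      ring
    have hz1 : (u : ℂ) + 1 =
        2 * (Real.cos (θ / 2) : ℂ) * Complex.exp ((θ / 2 : ℝ) * Complex.I) := by
      rw [huv]; exact exp_add_one θ
    have hz1ne : (u : ℂ) + 1 ≠ 0 := by
      rw [hz1]
      exact mul_ne_zero (mul_ne_zero two_ne_zero
        (Complex.ofReal_ne_zero.mpr (ne_of_gt hcos))) (Complex.exp_ne_zero _)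
    have e2 : ((u : ℂ) + 1) * evalz (u : ℂ) D = (u : ℂ) ^ ((p : ℤ)) + 1 := by
      have h := congrArg (evalz (u : ℂ)) hD
      rw [evalz_mul, evalz_add, evalz_add, evalz_T u, evalz_T u, evalz_one] at h
      simpa using h
    have hzp1 : (u : ℂ) ^ ((p : ℤ)) + 1 =
        2 * (Real.cos (p * θ / 2) : ℂ) * Complex.exp ((p * θ / 2 : ℝ) * Complex.I) := by
      rw [hzp]; exact exp_add_one (p * θ)
    have key : ((u : ℂ) ^ (-(j : ℤ)) * evalz (u : ℂ) D) * ((u : ℂ) + 1) =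
        ((Real.cos (p * θ / 2) / Real.cos (θ / 2) : ℝ) : ℂ) * ((u : ℂ) + 1) := by
      have hexp : Complex.exp ((-(j : ℝ) * θ : ℝ) * Complex.I) *
          Complex.exp ((p * θ / 2 : ℝ) * Complex.I) =
          Complex.exp ((θ / 2 : ℝ) * Complex.I) := by
        rw [← Complex.exp_add]
        congr 1
        push_cast
        rw [hpc]
        ring
      calc ((u : ℂ) ^ (-(j : ℤ)) * evalz (u : ℂ) D) * ((u : ℂ) + 1)
          = (u : ℂ) ^ (-(j : ℤ)) * (((u : ℂ) + 1) * evalz (u : ℂ) D) := by ring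
        _ = (u : ℂ) ^ (-(j : ℤ)) * ((u : ℂ) ^ ((p : ℤ)) + 1) := by rw [e2]
        _ = 2 * (Real.cos (p * θ / 2) : ℂ) * Complex.exp ((θ / 2 : ℝ) * Complex.I) := by
            rw [hzj, hzp1, ← hexp]; ring
        _ = ((Real.cos (p * θ / 2) / Real.cos (θ / 2) : ℝ) : ℂ) * ((u : ℂ) + 1) := by
            rw [hz1, show ((Real.cos (p * θ / 2) / Real.cos (θ / 2) : ℝ) : ℂ) =
              (Real.cos (p * θ / 2) : ℂ) / (Real.cos (θ / 2) : ℂ) from Complex.ofReal_div _ _]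
            have hne : (Real.cos (θ / 2) : ℂ) ≠ 0 := Complex.ofReal_ne_zero.mpr (ne_of_gt hcos)
            have hc : (Real.cos (p * θ / 2) : ℂ) / (Real.cos (θ / 2) : ℂ) *
                (Real.cos (θ / 2) : ℂ) = (Real.cos (p * θ / 2) : ℂ) :=
              div_mul_cancel₀ _ hne
            calc 2 * (Real.cos (p * θ / 2) : ℂ) * Complex.exp ((θ / 2 : ℝ) * Complex.I)
                = ((Real.cos (p * θ / 2) : ℂ) / (Real.cos (θ / 2) : ℂ) *
                    (Real.cos (θ / 2) : ℂ)) * (2 * Complex.exp ((θ / 2 : ℝ) * Complex.I)) := by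
                  rw [hc]; ring
              _ = (Real.cos (p * θ / 2) : ℂ) / (Real.cos (θ / 2) : ℂ) *
                  (2 * (Real.cos (θ / 2) : ℂ) * Complex.exp ((θ / 2 : ℝ) * Complex.I)) := by
                  ring
    have := mul_right_cancel₀ hz1ne key
    calc evalz (Complex.exp (θ * Complex.I)) (T (-(((p : ℤ) - 1) / 2)) * D)
        = evalz (u : ℂ) (T (-(j : ℤ)) * D) := by rw [hj2, huv]
      _ = (u : ℂ) ^ (-(j : ℤ)) * evalz (u : ℂ) D := by rw [evalz_mul, evalz_T]
      _ = _ := this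
  · -- sign iff
    have hp0 : (0 : ℝ) < p := by positivity
    have hx : 0 < p * θ / 2 := by positivity
    have h1 : Real.cos (p * θ / 2) / Real.cos (θ / 2) < 0 ↔ Real.cos (p * θ / 2) < 0 := by
      constructor
      · intro h
        rcases div_neg_iff.mp h with ⟨_, h2⟩ | ⟨h2, _⟩
        · linarith
        · exact h2
      · intro h
        exact div_neg_of_neg_of_pos h hcos
    rw [h1, cos_neg_iff_nat hx]
    refine exists_congr fun k => ?_
    constructor
    · rintro ⟨ha, hb⟩
      constructor
      · rw [div_lt_iff₀ hp0]; nlinarith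
      · rw [lt_div_iff₀ hp0]; nlinarith
    · rintro ⟨ha, hb⟩
      rw [div_lt_iff₀ hp0] at ha
      rw [lt_div_iff₀ hp0] at hb
      constructor
      · nlinarith
      · nlinarith
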